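/- Let D ≡ 0 or 1 (mod 4) be a non-square integer, and let q₁ < q₂ < ⋯ be all primes with Kronecker symbol (D/q) = -1. If n₀ is the turning index of D and n₀ is even, then for all i ≥ n₀ + 1 one has |D| + q_{i+1} ≤ q₁q₂⋯q_i; in particular q_{i+1} < q₁q₂⋯q_i. -/

import Mathlib

/-- Kronecker symbol `(D/q)` at a prime `q`, for discriminants `D ≡ 0,1 (mod 4)`. -/
def kron (D : ℤ) (q : ℕ) : ℤ :=
  if q = 2 then (if D % 8 = 1 then 1 else if D % 8 = 5 then -1 else 0)
  else jacobiSym D q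

private lemma kron_trichotomy (D : ℤ) (q : ℕ) : kron D q = 0 ∨ kron D q = 1 ∨ kron D q = -1 := by
  unfold kron
  split
  · split
    · tauto
    · split <;> tauto
  · rcases jacobiSym.trichotomy D q with h | h | h <;> tauto

private lemma kron_F (D : ℤ) (hD : D % 4 = 0 ∨ D % 4 = 1) (hD0 : D ≠ 0) :
    ∃ F : ℕ → ℤ, F 1 = 1 ∧
      (∀ p : ℕ, p.Prime → F p = kron D p) ∧
      (∀ a b : ℕ, a ≠ 0 → b ≠ 0 → F (a * b) = F a * F b) ∧
      (∀ m m' : ℕ, 0 < m → 0 < m' → (2 ∣ D.natAbs → Odd m) → (2 ∣ D.natAbs → Odd m') →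
        m % D.natAbs = m' % D.natAbs → F m = F m') ∧
      (∀ N : ℕ, 0 < N → F N = -1 → ∃ p : ℕ, p.Prime ∧ p ∣ N ∧ kron D p = -1) := by
  rcases hD with hD4 | hD4
  · -- D even case : F m := J(D | m)
    set d := D.natAbs with hd
    have hd0 : d ≠ 0 := Int.natAbs_ne_zero.mpr hD0
    have h4D : (4 : ℤ) ∣ D := Int.dvd_of_emod_eq_zero hD4
    have h4d : 4 ∣ d := by
      have := Int.natAbs_dvd_natAbs.mpr h4D
      simpa using this
    have h2d : 2 ∣ d := dvd_trans (by norm_num) h4d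
    set e := d.factorization 2 with he
    have he2 : 2 ≤ e := by
      rw [he]
      exact (Nat.Prime.pow_dvd_iff_le_factorization Nat.prime_two hd0).mp (by simpa using h4d)
    have hped : 2 ^ e ∣ d :=
      (Nat.Prime.pow_dvd_iff_le_factorization Nat.prime_two hd0).mpr le_rfl
    have hpeD : ((2 ^ e : ℕ) : ℤ) ∣ D := by
      refine dvd_trans (Int.natCast_dvd_natCast.mpr hped) ?_
      exact Int.natAbs_dvd.mpr dvd_rfl
    set c := D / ((2 : ℤ) ^ e) with hc
    have hDc : (2 : ℤ) ^ e * c = D := by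
      rw [hc]
      exact Int.mul_ediv_cancel' (by exact_mod_cast hpeD)
    set u := c.natAbs with hu
    have hdu : d = 2 ^ e * u := by
      rw [hd, ← hDc, Int.natAbs_mul]
      congr 1
    have hu_odd : u % 2 = 1 := by
      rcases Nat.even_or_odd u with h | h
      · exfalso
        obtain ⟨k, hk⟩ := h
        have : 2 ^ (e + 1) ∣ d := by
          rw [hdu, hk]
          exact ⟨k, by ring⟩
        have := (Nat.Prime.pow_dvd_iff_le_factorization Nat.prime_two hd0).mp this
        omega
      · exact Nat.odd_iff.mp h
    have hcu := Int.natAbs_eq c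
    rw [← hu] at hcu
    have hu4 : u % 4 = 1 ∨ u % 4 = 3 := by omega
    have hud : u ∣ d := ⟨2 ^ e, by rw [hdu]; ring⟩
    -- master formula
    have master : ∀ m : ℕ, Odd m →
        jacobiSym D m = ZMod.χ₈ (m : ZMod 8) ^ e *
          (ZMod.χ₄ (m : ZMod 4) ^ (if c % 4 = 1 then 0 else 1) * jacobiSym (m : ℤ) u) := by
      intro m hm
      have hm2 : m % 2 = 1 := Nat.odd_iff.mp hm
      have h1 : jacobiSym D m = jacobiSym 2 m ^ e * jacobiSym c m := by
        rw [← hDc, jacobiSym.mul_left, jacobiSym.pow_left]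
      rw [h1, jacobiSym.at_two hm]
      congr 1
      have hm4 : m % 4 = 1 ∨ m % 4 = 3 := by omega
      rcases hcu with hcu | hcu
      · rcases hu4 with h | h
        · rw [if_pos (show c % 4 = 1 by omega), pow_zero, one_mul, hcu]
          exact jacobiSym.quadratic_reciprocity_one_mod_four h hm
        · rw [if_neg (show ¬ c % 4 = 1 by omega), pow_one, hcu]
          rcases hm4 with hm4 | hm4
          · rw [ZMod.χ₄_nat_one_mod_four hm4, one_mul]
            exact jacobiSym.quadratic_reciprocity_one_mod_four' (Nat.odd_iff.mpr hu_odd) hm4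
          · rw [ZMod.χ₄_nat_three_mod_four hm4,
              jacobiSym.quadratic_reciprocity_three_mod_four h hm4]
            ring
      · have hneg : jacobiSym c m = ZMod.χ₄ (m : ZMod 4) * jacobiSym (u : ℤ) m := by
          rw [hcu]
          exact jacobiSym.neg _ hm
        rcases hu4 with h | h
        · rw [if_neg (show ¬ c % 4 = 1 by omega), pow_one, hneg,
            jacobiSym.quadratic_reciprocity_one_mod_four h hm]
        · rw [if_pos (show c % 4 = 1 by omega), pow_zero, one_mul, hneg]
          rcases hm4 with hm4 | hm4
          · rw [ZMod.χ₄_nat_one_mod_four hm4, one_mul,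
              jacobiSym.quadratic_reciprocity_one_mod_four' (Nat.odd_iff.mpr hu_odd) hm4]
          · rw [ZMod.χ₄_nat_three_mod_four hm4,
              jacobiSym.quadratic_reciprocity_three_mod_four h hm4]
            ring
    have hJ2 : jacobiSym D 2 = 0 := by
      rw [jacobiSym.eq_zero_iff]
      refine ⟨by norm_num, ?_⟩
      have h2D : (2 : ℤ) ∣ D := Int.dvd_of_emod_eq_zero (by omega)
      have h2g : (2 : ℤ) ∣ (Int.gcd D ((2 : ℕ) : ℤ) : ℤ) := Int.dvd_coe_gcd h2D (by norm_num)
      omega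
    refine ⟨fun m => jacobiSym D m, jacobiSym.one_right D, ?_, ?_, ?_, ?_⟩
    · intro p pp
      show jacobiSym D p = kron D p
      by_cases hp2 : p = 2
      · subst hp2
        rw [hJ2]
        simp only [kron, eq_self_iff_true, if_true]
        rw [if_neg (show ¬ D % 8 = 1 by omega), if_neg (show ¬ D % 8 = 5 by omega)]
      · simp [kron, hp2]
    · intro a b ha hb
      exact jacobiSym.mul_right' D ha hb
    · intro m m' hm hm' hOm hOm' hmod
      show jacobiSym D m = jacobiSym D m'
      have hOm := hOm h2d
      have hOm' := hOm' h2d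
      rw [master m hOm, master m' hOm']
      have hmod4 : m % 4 = m' % 4 := Nat.ModEq.of_dvd h4d hmod
      have hmodu : m % u = m' % u := Nat.ModEq.of_dvd hud hmod
      have hχ₄ : ZMod.χ₄ (m : ZMod 4) = ZMod.χ₄ (m' : ZMod 4) := by
        rw [ZMod.χ₄_nat_mod_four m, ZMod.χ₄_nat_mod_four m', hmod4]
      have hJu : jacobiSym (m : ℤ) u = jacobiSym (m' : ℤ) u := by
        apply jacobiSym.mod_left'
        omega
      have hχ₈ : ZMod.χ₈ (m : ZMod 8) ^ e = ZMod.χ₈ (m' : ZMod 8) ^ e := by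
        rcases Nat.even_or_odd e with he' | he'
        · have key : ∀ k : ℕ, k % 2 = 1 → ZMod.χ₈ (k : ZMod 8) ^ e = 1 := by
            intro k hk
            have : ZMod.χ₈ (k : ZMod 8) = 1 ∨ ZMod.χ₈ (k : ZMod 8) = -1 := by
              rw [ZMod.χ₈_nat_eq_if_mod_eight, if_neg (show ¬ k % 2 = 0 by omega)]
              split <;> tauto
            rcases this with h | h
            · rw [h, one_pow]
            · rw [h, he'.neg_one_pow]
          rw [key m (Nat.odd_iff.mp hOm), key m' (Nat.odd_iff.mp hOm')]
        · have he3 : 3 ≤ e := by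
            have := Nat.odd_iff.mp he'
            omega
          have h8d : 8 ∣ d := dvd_trans (pow_dvd_pow 2 he3) hped
          have hmod8 : m % 8 = m' % 8 := Nat.ModEq.of_dvd h8d hmod
          rw [ZMod.χ₈_nat_mod_eight m, ZMod.χ₈_nat_mod_eight m', hmod8]
      rw [hχ₄, hJu, hχ₈]
    · intro N hN hFN
      replace hFN : jacobiSym D N = -1 := hFN
      obtain ⟨p, pp, pdvd, hJp⟩ := jacobiSym.eq_neg_one_at_prime_divisor_of_eq_neg_one hFN
      have hp2 : p ≠ 2 := by
        intro h
        rw [h, hJ2] at hJp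
        norm_num at hJp
      refine ⟨p, pp, pdvd, ?_⟩
      simpa [kron, hp2] using hJp
  · -- D odd case : F m := J(m | d)
    set d := D.natAbs with hd
    have hDe := Int.natAbs_eq D
    rw [← hd] at hDe
    have hd2 : d % 2 = 1 := by rcases hDe with h | h <;> omega
    have hd_odd : Odd d := Nat.odd_iff.mpr hd2
    have hnd2 : ¬ (2 ∣ d) := by omega
    have hkq : ∀ p : ℕ, p.Prime → jacobiSym (p : ℤ) d = kron D p := by
      intro p pp
      by_cases hp2 : p = 2
      · subst hp2
        have h8 : D % 8 = 1 ∨ D % 8 = 5 := by omega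
        have hJ : jacobiSym ((2 : ℕ) : ℤ) d = ZMod.χ₈ (d : ZMod 8) := by
          rw [show ((2 : ℕ) : ℤ) = 2 from rfl]
          exact jacobiSym.at_two hd_odd
        rw [hJ, ZMod.χ₈_nat_eq_if_mod_eight, if_neg (show ¬ d % 2 = 0 by omega)]
        simp only [kron, eq_self_iff_true, if_true]
        rcases h8 with h8 | h8 <;> rcases hDe with hDe | hDe
        · rw [if_pos (show d % 8 = 1 ∨ d % 8 = 7 by omega), if_pos h8]
        · rw [if_pos (show d % 8 = 1 ∨ d % 8 = 7 by omega), if_pos h8]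
        · rw [if_neg (show ¬ (d % 8 = 1 ∨ d % 8 = 7) by omega),
            if_neg (show ¬ D % 8 = 1 by omega), if_pos h8]
        · rw [if_neg (show ¬ (d % 8 = 1 ∨ d % 8 = 7) by omega),
            if_neg (show ¬ D % 8 = 1 by omega), if_pos h8]
      · have hkr : kron D p = jacobiSym D p := by simp [kron, hp2]
        have hodd_p : Odd p := pp.odd_of_ne_two hp2
        have hp2' : p % 2 = 1 := Nat.odd_iff.mp hodd_p
        rw [hkr]
        rcases hDe with hDe | hDe
        · have hd4 : d % 4 = 1 := by omega
          rw [hDe]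
          exact (jacobiSym.quadratic_reciprocity_one_mod_four hd4 hodd_p).symm
        · have hd4 : d % 4 = 3 := by omega
          rw [hDe, show (-(d : ℤ)) = -(d : ℤ) from rfl]
          rw [jacobiSym.neg _ hodd_p]
          have hp4 : p % 4 = 1 ∨ p % 4 = 3 := by omega
          rcases hp4 with hp4 | hp4
          · rw [ZMod.χ₄_nat_one_mod_four hp4, one_mul,
              jacobiSym.quadratic_reciprocity_one_mod_four' hd_odd hp4]
          · rw [ZMod.χ₄_nat_three_mod_four hp4,
              jacobiSym.quadratic_reciprocity_three_mod_four hd4 hp4]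
            ring
    refine ⟨fun m => jacobiSym (m : ℤ) d, by simpa using jacobiSym.one_left d, ?_, ?_, ?_, ?_⟩
    · intro p pp
      exact hkq p pp
    · intro a b _ _
      show jacobiSym ((a * b : ℕ) : ℤ) d = _
      push_cast
      exact jacobiSym.mul_left _ _ _
    · intro m m' _ _ _ _ hmod
      apply jacobiSym.mod_left'
      omega
    · intro N hN hFN
      replace hFN : jacobiSym (N : ℤ) d = -1 := hFN
      by_contra hcon
      push_neg at hcon
      have h0 : (0 : ℤ) ≤ jacobiSym (N : ℤ) d := by
        rw [← Nat.prod_primeFactorsList hN.ne', Nat.cast_list_prod, jacobiSym.list_prod_left,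
          List.map_map]
        apply List.prod_nonneg
        intro x hx
        simp only [List.mem_map, Function.comp] at hx
        obtain ⟨p, hpL, rfl⟩ := hx
        have pp := Nat.prime_of_mem_primeFactorsList hpL
        have pdvd := Nat.dvd_of_mem_primeFactorsList hpL
        have := hkq p pp
        rcases kron_trichotomy D p with h | h | h
        · rw [this, h]
        · rw [this, h]; norm_num
        · exact absurd h (hcon p pp pdvd)
      rw [hFN] at h0
      norm_num at h0

theorem stmt12 (D : ℤ) (hD : D % 4 = 0 ∨ D % 4 = 1) (hns : ¬ IsSquare D)
    (d : ℕ) (hd : d = D.natAbs) (n₀ : ℕ) (hn₀ : 1 ≤ n₀)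
    (hlt : (∏ j ∈ Finset.range n₀, Nat.nth (fun q => q.Prime ∧ kron D q = -1) j) < d)
    (hgt : d < ∏ j ∈ Finset.range (n₀ + 1), Nat.nth (fun q => q.Prime ∧ kron D q = -1) j)
    (heven : Even n₀) :
    ∀ i : ℕ, n₀ + 1 ≤ i →
      d + Nat.nth (fun q => q.Prime ∧ kron D q = -1) i ≤
        ∏ j ∈ Finset.range i, Nat.nth (fun q => q.Prime ∧ kron D q = -1) j := by
  classical
  set pr : ℕ → Prop := fun q => q.Prime ∧ kron D q = -1 with hprdef
  have hD0 : D ≠ 0 := by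
    intro h
    exact hns (h ▸ ⟨0, by norm_num⟩)
  obtain ⟨F, hF1, hFq, hFmul, hFper, hFfac⟩ := kron_F D hD hD0
  rw [← hd] at hFper
  have hd1 : 0 < d := lt_of_le_of_lt (Nat.zero_le _) hlt
  have hn₀2 : 2 ≤ n₀ := by
    have := Nat.even_iff.mp heven
    omega
  -- no element of the set divides d
  have hqnd : ∀ p, pr p → ¬ p ∣ d := by
    intro p hp hdvd
    have hpD : (p : ℤ) ∣ D := by
      have h1 : (p : ℕ) ∣ D.natAbs := hd ▸ hdvd
      exact (Int.natCast_dvd_natCast.mpr h1).trans (Int.natAbs_dvd.mpr dvd_rfl)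
    by_cases hp2 : p = 2
    · subst hp2
      have hpD' : (2 : ℤ) ∣ D := by exact_mod_cast hpD
      have hD2 : D % 2 = 0 := by omega
      have h0 : kron D 2 = 0 := by
        simp only [kron, eq_self_iff_true, if_true]
        rw [if_neg (show ¬ D % 8 = 1 by omega), if_neg (show ¬ D % 8 = 5 by omega)]
      rw [hp.2] at h0
      norm_num at h0
    · have hkr : kron D p = jacobiSym D p := by simp [kron, hp2]
      have h0 : jacobiSym D p = 0 := by
        rw [jacobiSym.mod_left, Int.emod_eq_zero_of_dvd hpD]
        exact jacobiSym.zero_left hp.1.one_lt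
      have hpv := hp.2
      rw [hkr, h0] at hpv
      norm_num at hpv
  have hodd : 2 ∣ d → ∀ p, pr p → Odd p := by
    intro h2d p hp
    have hp2 : p ≠ 2 := by
      intro h
      exact hqnd p hp (h ▸ h2d)
    exact hp.1.odd_of_ne_two hp2
  -- the key construction
  have key : ∀ i : ℕ, n₀ + 1 ≤ i → (∀ j, j < i → pr (Nat.nth pr j)) →
      (∀ j k, j < k → k < i → Nat.nth pr j < Nat.nth pr k) →
      ∃ p, pr p ∧ (∀ j, j < i → p ≠ Nat.nth pr j) ∧
        d + p ≤ ∏ j ∈ Finset.range i, Nat.nth pr j := by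
    intro i hi hm hmono
    have hq2 : ∀ j, j < i → 2 ≤ Nat.nth pr j := fun j hj => (hm j hj).1.two_le
    have hprodpos : ∀ s : Finset ℕ, (∀ j ∈ s, j < i) → 0 < ∏ j ∈ s, Nat.nth pr j :=
      fun s hs => Finset.prod_pos fun j hj => lt_of_lt_of_le two_pos (hq2 j (hs j hj))
    have hprododd : 2 ∣ d → ∀ s : Finset ℕ, (∀ j ∈ s, j < i) → Odd (∏ j ∈ s, Nat.nth pr j) := by
      intro h2 s hs
      refine Finset.prod_induction _ Odd (fun a b ha hb => ha.mul hb) odd_one ?_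
      exact fun j hj => hodd h2 _ (hm j (hs j hj))
    have hFprod : ∀ s : Finset ℕ, (∀ j ∈ s, j < i) →
        F (∏ j ∈ s, Nat.nth pr j) = (-1) ^ s.card := by
      intro s hs
      induction s using Finset.induction with
      | empty => simpa using hF1
      | @insert a s' ha ih =>
        have hai : a < i := hs a (Finset.mem_insert_self a s')
        have hs' : ∀ j ∈ s', j < i := fun j hj => hs j (Finset.mem_insert_of_mem hj)
        rw [Finset.prod_insert ha,
          hFmul _ _ (by have := hq2 a hai; omega) (by have := hprodpos s' hs'; omega),
          hFq _ (hm a hai).1, (hm a hai).2, ih hs', Finset.card_insert_of_notMem ha,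
          pow_succ]
        ring
    have hQle : ∀ a b : ℕ, a ≤ b → b ≤ i →
        (∏ j ∈ Finset.range a, Nat.nth pr j) ≤ ∏ j ∈ Finset.range b, Nat.nth pr j := by
      intro a b hab hbi
      apply Finset.prod_le_prod_of_subset_of_one_le' (Finset.range_subset_range.mpr hab)
      intro j hj _
      exact le_trans one_le_two (hq2 j (lt_of_lt_of_le (Finset.mem_range.mp hj) hbi))
    have hQd : d + 1 ≤ ∏ j ∈ Finset.range (n₀ + 1), Nat.nth pr j := hgt
    rcases Nat.even_or_odd i with hieven | hiodd
    · -- i even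
      have hie : i % 2 = 0 := Nat.even_iff.mp hieven
      have hne : n₀ % 2 = 0 := Nat.even_iff.mp heven
      have hi2 : n₀ + 2 ≤ i := by omega
      have hBodd' : ∀ j ∈ Finset.Ico 1 i, j < i := fun j hj => (Finset.mem_Ico.mp hj).2
      have hQB : ∏ j ∈ Finset.range i, Nat.nth pr j =
          Nat.nth pr 0 * ∏ j ∈ Finset.Ico 1 i, Nat.nth pr j := by
        rw [Finset.range_eq_Ico]
        exact Finset.prod_eq_prod_Ico_succ_bot (by omega) _
      set B := ∏ j ∈ Finset.Ico 1 i, Nat.nth pr j with hBdef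
      have hBpos : 0 < B := hprodpos _ hBodd'
      have hFB : F B = -1 := by
        rw [hFprod _ hBodd', Nat.card_Ico]
        exact (Nat.odd_iff.mpr (by omega)).neg_one_pow
      have hBQ : (∏ j ∈ Finset.range (i - 1), Nat.nth pr j) ≤ B := by
        rw [hBdef, Finset.prod_Ico_eq_prod_range]
        apply Finset.prod_le_prod'
        intro j hj
        have hj' := Finset.mem_range.mp hj
        exact le_of_lt (hmono j (1 + j) (by omega) (by omega))
      have hBd : d + 1 ≤ B :=
        le_trans (le_trans hQd (hQle (n₀ + 1) (i - 1) (by omega) (by omega))) hBQ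
      set R := ∏ j ∈ Finset.Ico 1 (n₀ + 1), Nat.nth pr j with hRdef
      have hQnR : ∏ j ∈ Finset.range (n₀ + 1), Nat.nth pr j = Nat.nth pr 0 * R := by
        rw [Finset.range_eq_Ico]
        exact Finset.prod_eq_prod_Ico_succ_bot (by omega) _
      have hdR : d + 1 ≤ Nat.nth pr 0 * R := by rw [← hQnR]; exact hQd
      have hBR : R * Nat.nth pr (n₀ + 1) ≤ B := by
        have h1 : ∏ j ∈ Finset.Ico 1 (n₀ + 2), Nat.nth pr j = R * Nat.nth pr (n₀ + 1) :=
          Finset.prod_Ico_succ_top (by omega) _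
        rw [← h1, hBdef]
        apply Finset.prod_le_prod_of_subset_of_one_le'
          (Finset.Ico_subset_Ico le_rfl (by omega))
        intro j hj _
        exact le_trans one_le_two (hq2 j (Finset.mem_Ico.mp hj).2)
      have hgap : Nat.nth pr 0 + 5 ≤ Nat.nth pr (n₀ + 1) := by
        have h01 : Nat.nth pr 0 < Nat.nth pr 1 := hmono 0 1 (by omega) (by omega)
        have h12 : Nat.nth pr 1 < Nat.nth pr 2 := hmono 1 2 (by omega) (by omega)
        have h23 : Nat.nth pr 2 < Nat.nth pr 3 := hmono 2 3 (by omega) (by omega)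
        have hq0 : 2 ≤ Nat.nth pr 0 := hq2 0 (by omega)
        have ho1 : Nat.nth pr 1 % 2 = 1 :=
          Nat.odd_iff.mp ((hm 1 (by omega)).1.odd_of_ne_two (by omega))
        have ho2 : Nat.nth pr 2 % 2 = 1 :=
          Nat.odd_iff.mp ((hm 2 (by omega)).1.odd_of_ne_two (by omega))
        have ho3 : Nat.nth pr 3 % 2 = 1 :=
          Nat.odd_iff.mp ((hm 3 (by omega)).1.odd_of_ne_two (by omega))
        have h3n : Nat.nth pr 3 ≤ Nat.nth pr (n₀ + 1) := by
          rcases eq_or_lt_of_le (show 3 ≤ n₀ + 1 by omega) with h | h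
          · rw [← h]
          · exact le_of_lt (hmono 3 (n₀ + 1) h (by omega))
        omega
      have hRpos : 0 < R :=
        hprodpos _ (fun j hj => by have := Finset.mem_Ico.mp hj; omega)
      have hq0 : 2 ≤ Nat.nth pr 0 := hq2 0 (by omega)
      have hsize : d * (Nat.nth pr 0 + 1) + B ≤ B * Nat.nth pr 0 := by
        nlinarith [hdR, hBR, hgap, hRpos, hq0]
      by_cases hbad : Nat.nth pr 0 ∣ B - d
      · -- bad case, use N = B + d * q 0
        set N := B + d * Nat.nth pr 0 with hNdef
        have hNpos : 0 < N := by omega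
        have hFN : F N = -1 := by
          rw [hFper N B hNpos hBpos ?_ ?_ (Nat.add_mul_mod_self_left B d (Nat.nth pr 0))]
          · exact hFB
          · intro h2
            exact (hprododd h2 _ hBodd').add_even
              (((even_iff_two_dvd).mpr h2).mul_right _)
          · intro h2
            exact hprododd h2 _ hBodd'
        obtain ⟨p, pp, pdvd, hkp⟩ := hFfac N hNpos hFN
        refine ⟨p, ⟨pp, hkp⟩, ?_, ?_⟩
        · intro j hj heq
          rcases Nat.eq_zero_or_pos j with rfl | hj1
          · have h1 : Nat.nth pr 0 ∣ N := heq ▸ pdvd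
            have h2 : Nat.nth pr 0 ∣ d * Nat.nth pr 0 := dvd_mul_left _ _
            have h3 : Nat.nth pr 0 ∣ B := by
              have := Nat.dvd_sub h1 h2
              rwa [show N - d * Nat.nth pr 0 = B by omega] at this
            have h4 : Nat.nth pr 0 ∣ d := by
              have := Nat.dvd_sub h3 hbad
              rwa [show B - (B - d) = d by omega] at this
            exact hqnd _ (hm 0 (by omega)) h4
          · have h1 : Nat.nth pr j ∣ N := heq ▸ pdvd
            have h2 : Nat.nth pr j ∣ B :=
              Finset.dvd_prod_of_mem _ (Finset.mem_Ico.mpr ⟨hj1, hj⟩)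
            have h3 : Nat.nth pr j ∣ d * Nat.nth pr 0 := by
              have := Nat.dvd_sub h1 h2
              rwa [show N - B = d * Nat.nth pr 0 by omega] at this
            rcases ((hm j hj).1.dvd_mul).mp h3 with h | h
            · exact hqnd _ (hm j hj) h
            · have hle := Nat.le_of_dvd (by omega) h
              have := hmono 0 j hj1 hj
              omega
        · have hpN : p ≤ B + d * Nat.nth pr 0 := by
            have := Nat.le_of_dvd hNpos pdvd
            omega
          rw [hQB]
          linarith [hsize, hpN]
      · -- good case, N = B - d
        set N := B - d with hNdef
        have hNpos : 0 < N := by omega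
        have hFN : F N = -1 := by
          rw [hFper N B hNpos hBpos ?_ ?_ ?_]
          · exact hFB
          · intro h2
            have hBo := Nat.odd_iff.mp (hprododd h2 _ hBodd')
            rw [Nat.odd_iff]
            omega
          · intro h2
            exact hprododd h2 _ hBodd'
          · rw [show B = N + d by omega]
            exact (Nat.add_mod_right N d).symm
        obtain ⟨p, pp, pdvd, hkp⟩ := hFfac N hNpos hFN
        refine ⟨p, ⟨pp, hkp⟩, ?_, ?_⟩
        · intro j hj heq
          rcases Nat.eq_zero_or_pos j with rfl | hj1
          · exact hbad (heq ▸ pdvd)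
          · have h1 : Nat.nth pr j ∣ N := heq ▸ pdvd
            have h2 : Nat.nth pr j ∣ B :=
              Finset.dvd_prod_of_mem _ (Finset.mem_Ico.mpr ⟨hj1, hj⟩)
            have h3 : Nat.nth pr j ∣ d := by
              have := Nat.dvd_sub h2 h1
              rwa [show B - N = d by omega] at this
            exact hqnd _ (hm j hj) h3
        · have hdpB : d + p ≤ B := by
            have := Nat.le_of_dvd hNpos pdvd
            omega
          rw [hQB]
          exact le_trans hdpB (Nat.le_mul_of_pos_left B (by omega))
    · -- i odd
      have hPmem : ∀ j ∈ Finset.range i, j < i := fun j hj => Finset.mem_range.mp hj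
      set P := ∏ j ∈ Finset.range i, Nat.nth pr j with hPdef
      have hPpos : 0 < P := hprodpos _ hPmem
      have hPd : d + 1 ≤ P := le_trans hQd (hQle (n₀ + 1) i hi le_rfl)
      have hFP : F P = -1 := by
        rw [hFprod _ hPmem, Finset.card_range]
        exact hiodd.neg_one_pow
      set N := P - d with hNdef
      have hNpos : 0 < N := by omega
      have hFN : F N = -1 := by
        rw [hFper N P hNpos hPpos ?_ ?_ ?_]
        · exact hFP
        · intro h2
          have hPo := Nat.odd_iff.mp (hprododd h2 _ hPmem)
          rw [Nat.odd_iff]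
          omega
        · intro h2
          exact hprododd h2 _ hPmem
        · rw [show P = N + d by omega]
          exact (Nat.add_mod_right N d).symm
      obtain ⟨p, pp, pdvd, hkp⟩ := hFfac N hNpos hFN
      refine ⟨p, ⟨pp, hkp⟩, ?_, ?_⟩
      · intro j hj heq
        have h1 : Nat.nth pr j ∣ N := heq ▸ pdvd
        have h2 : Nat.nth pr j ∣ P :=
          Finset.dvd_prod_of_mem _ (Finset.mem_range.mpr hj)
        have h3 : Nat.nth pr j ∣ d := by
          have := Nat.dvd_sub h2 h1
          rwa [show P - N = d by omega] at this
        exact hqnd _ (hm j hj) h3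
      · have hpN : p ≤ N := Nat.le_of_dvd hNpos pdvd
        omega
  -- counting
  have hcount : ∀ p, pr p → ∀ hf : (setOf pr).Finite, Nat.count pr p < hf.toFinset.card := by
    intro p hp hf
    have h1 : Nat.count pr (p + 1) ≤ hf.toFinset.card := by
      rw [Nat.count_eq_card_filter_range]
      apply Finset.card_le_card
      intro x hx
      simp only [Finset.mem_filter] at hx
      exact hf.mem_toFinset.mpr hx.2
    have h2 : Nat.count pr (p + 1) = Nat.count pr p + 1 := by
      rw [Nat.count_succ, if_pos hp]
    omega
  have hCARD : ∀ i : ℕ, ∀ hf : (setOf pr).Finite, i < hf.toFinset.card := by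
    intro i
    induction i using Nat.strong_induction_on with
    | _ i ih =>
      intro hf
      by_cases hi : n₀ + 1 ≤ i
      · have hm : ∀ j, j < i → pr (Nat.nth pr j) :=
          fun j hj => Nat.nth_mem j (fun hf' => ih j hj hf')
        have hmono : ∀ j k, j < k → k < i → Nat.nth pr j < Nat.nth pr k :=
          fun j k hjk hk => Nat.nth_lt_nth' hjk (fun hf' => ih k hk hf')
        obtain ⟨p, hp, hne, _⟩ := key i hi hm hmono
        have hcp : i ≤ Nat.count pr p := by
          by_contra h
          push_neg at h
          exact hne _ h (Nat.nth_count hp).symm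
        exact lt_of_le_of_lt hcp (hcount p hp hf)
      · have hcard : n₀ < hf.toFinset.card := by
          by_contra h
          push_neg at h
          have h0 : Nat.nth pr n₀ = 0 := Nat.nth_of_card_le hf h
          have hz : ∏ j ∈ Finset.range (n₀ + 1), Nat.nth pr j = 0 :=
            Finset.prod_eq_zero (Finset.mem_range.mpr (by omega)) h0
          rw [hz] at hgt
          omega
        omega
  intro i hi
  have hm : ∀ j, j < i → pr (Nat.nth pr j) :=
    fun j _ => Nat.nth_mem j (fun hf => hCARD j hf)
  have hmono : ∀ j k, j < k → k < i → Nat.nth pr j < Nat.nth pr k :=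
    fun j k hjk _ => Nat.nth_lt_nth' hjk (fun hf => hCARD k hf)
  obtain ⟨p, hp, hne, hle⟩ := key i hi hm hmono
  have hcp : i ≤ Nat.count pr p := by
    by_contra h
    push_neg at h
    exact hne _ h (Nat.nth_count hp).symm
  have hnth : Nat.nth pr i ≤ p := by
    have := Nat.nth_le_nth' hcp (fun hf => hcount p hp hf)
    rwa [Nat.nth_count hp] at this
  omega
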